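/- For every 0 < θ < 1 there exists a constant c_θ > 0 such that for all x, y > 0, (x^θ − y^θ)/(x − y) = c_θ · ∫_{0}^{∞} t^θ · (1/(x+t)) · (1/(y+t)) dt, where for x = y the left-hand side is interpreted as θ·x^(θ−1). -/

import Mathlib

open Real MeasureTheory
open Set

lemma aux_meas (θ a : ℝ) : Measurable (fun t : ℝ => t ^ θ / (a + t)^2) := by
  fun_prop

lemma aux_integrable (θ : ℝ) (hθ0 : 0 < θ) (hθ1 : θ < 1) (a : ℝ) (ha : 0 < a) :
    IntegrableOn (fun t => t ^ θ / (a + t)^2) (Ioi (0:ℝ)) := by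
  have hsplit : Ioi (0:ℝ) = Ioc 0 1 ∪ Ioi 1 := (Ioc_union_Ioi_eq_Ioi zero_le_one).symm
  rw [hsplit]
  apply IntegrableOn.union
  · apply Integrable.mono' (g := fun _ => (a^2)⁻¹)
    · exact integrableOn_const measure_Ioc_lt_top.ne
    · exact (aux_meas θ a).aestronglyMeasurable
    · filter_upwards [ae_restrict_mem measurableSet_Ioc] with t ht
      have h1 : (0:ℝ) < a + t := by nlinarith [ht.1]
      rw [Real.norm_of_nonneg (div_nonneg (Real.rpow_nonneg ht.1.le θ) (by positivity))]
      calc t ^ θ / (a+t)^2 ≤ 1 / (a+t)^2 := by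
            gcongr
            exact Real.rpow_le_one ht.1.le ht.2 hθ0.le
        _ ≤ 1 / a^2 := by
            apply one_div_le_one_div_of_le (by positivity)
            nlinarith [ht.1]
        _ = (a^2)⁻¹ := one_div _
  · apply Integrable.mono' (g := fun t => t ^ (θ - 2))
    · exact integrableOn_Ioi_rpow_of_lt (by linarith) one_pos
    · exact (aux_meas θ a).aestronglyMeasurable
    · filter_upwards [ae_restrict_mem measurableSet_Ioi] with t ht
      have ht0 : (0:ℝ) < t := lt_trans one_pos ht
      rw [Real.norm_of_nonneg (div_nonneg (Real.rpow_nonneg ht0.le θ) (by positivity))]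
      calc t ^ θ / (a+t)^2 ≤ t ^ θ / t^2 := by gcongr <;> nlinarith
        _ = t ^ θ / t ^ (2:ℝ) := by rw [Real.rpow_two]
        _ = t ^ (θ - 2) := by rw [← Real.rpow_sub ht0]

lemma aux_scaling (θ : ℝ) (a : ℝ) (ha : 0 < a) :
    ∫ t in Ioi (0:ℝ), t ^ θ / (a + t)^2
      = a ^ (θ - 1) * ∫ t in Ioi (0:ℝ), t ^ θ / (1 + t)^2 := by
  have h := integral_comp_mul_left_Ioi (fun t => t ^ θ / (a + t)^2) 0 ha
  rw [mul_zero] at h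
  have h2 : ∫ (x : ℝ) in Ioi 0, (fun t => t ^ θ / (a + t)^2) (a * x)
      = a ^ (θ - 2) * ∫ t in Ioi (0:ℝ), t ^ θ / (1 + t)^2 := by
    rw [← integral_const_mul]
    apply setIntegral_congr_fun measurableSet_Ioi
    intro s hs
    simp only
    have hs0 : (0:ℝ) < s := hs
    rw [Real.mul_rpow ha.le hs0.le]
    have h3 : (a + a * s)^2 = a ^ 2 * (1 + s)^2 := by ring
    rw [h3]
    have h4 : a ^ (θ - 2) = a ^ θ / a ^ (2:ℝ) := Real.rpow_sub ha θ 2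
    rw [h4, Real.rpow_two]
    have : (0:ℝ) < 1 + s := by linarith
    field_simp
  rw [h2, smul_eq_mul] at h
  have key : a * a ^ (θ - 2) = a ^ (θ - 1) := by
    have h5 := Real.rpow_add ha 1 (θ - 2)
    rw [Real.rpow_one] at h5
    rw [← h5]
    congr 1
    ring
  have h6 : ∫ t in Ioi (0:ℝ), t ^ θ / (a + t)^2
      = a * (a ^ (θ - 2) * ∫ t in Ioi (0:ℝ), t ^ θ / (1 + t)^2) := by
    rw [h, ← mul_assoc, mul_inv_cancel₀ ha.ne', one_mul]
  rw [h6, ← mul_assoc, key]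

lemma aux_Kpos (θ : ℝ) (hθ0 : 0 < θ) (hθ1 : θ < 1)
    (hK : IntegrableOn (fun t => t ^ θ / (1 + t)^2) (Ioi (0:ℝ))) :
    0 < ∫ t in Ioi (0:ℝ), t ^ θ / (1 + t)^2 := by
  rw [setIntegral_pos_iff_support_of_nonneg_ae]
  · apply lt_of_lt_of_le (b := volume (Ioi (0:ℝ)))
    · simp
    · apply measure_mono
      intro t ht
      have ht0 : (0:ℝ) < t := ht
      constructor
      · simp only [Function.mem_support]
        have : (0:ℝ) < t ^ θ / (1 + t)^2 := by positivity
        exact this.ne'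
      · exact ht
  · filter_upwards [ae_restrict_mem measurableSet_Ioi] with t ht
    have ht0 : (0:ℝ) < t := ht
    positivity
  · exact hK

lemma aux_inner (θ t y x : ℝ) (ht : 0 < t) (hy : 0 < y) (hyx : y < x) :
    ∫ u in Ioc y x, t ^ θ / (u + t)^2 = t ^ θ * (1/(y+t) - 1/(x+t)) := by
  rw [← intervalIntegral.integral_of_le hyx.le]
  simp_rw [div_eq_mul_inv]
  rw [intervalIntegral.integral_const_mul]
  congr 1
  have hderiv : ∀ u ∈ Set.uIcc y x, HasDerivAt (fun v => -(v+t)⁻¹) (((u+t)^2)⁻¹) u := by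
    intro u hu
    rw [Set.uIcc_of_le hyx.le] at hu
    have hu0 : (0:ℝ) < u + t := by have := hu.1; linarith
    have h0 : HasDerivAt (fun v : ℝ => v + t) 1 u := (hasDerivAt_id u).add_const t
    have h1 := h0.inv hu0.ne'
    have h2 := h1.neg
    convert h2 using 1
    · rfl
    · rfl
    · rfl
    · ring
  have hInt : IntervalIntegrable (fun u => ((u+t)^2)⁻¹) volume y x := by
    apply ContinuousOn.intervalIntegrable
    apply ContinuousOn.inv₀
    · fun_prop
    · intro u hu
      rw [Set.uIcc_of_le hyx.le] at hu
      have hu0 : (0:ℝ) < u + t := by have := hu.1; linarith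
      positivity
  rw [intervalIntegral.integral_eq_sub_of_hasDerivAt hderiv hInt]
  have hx0 : (0:ℝ) < x + t := by linarith
  have hy0 : (0:ℝ) < y + t := by linarith
  field_simp
  ring

lemma aux_fub (θ : ℝ) (hθ0 : 0 < θ) (hθ1 : θ < 1) (x y : ℝ) (hy : 0 < y) (hyx : y < x) :
    Integrable (Function.uncurry fun t u => t ^ θ / (u + t)^2)
      ((volume.restrict (Ioi (0:ℝ))).prod (volume.restrict (Ioc y x))) := by
  have hmeas : AEStronglyMeasurable (Function.uncurry fun t u : ℝ => t ^ θ / (u + t)^2)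
      ((volume.restrict (Ioi (0:ℝ))).prod (volume.restrict (Ioc y x))) := by
    apply Measurable.aestronglyMeasurable
    apply Measurable.div
    · exact (continuous_fst.rpow_const fun _ => Or.inr hθ0.le).measurable
    · exact ((measurable_snd.add measurable_fst).pow_const 2)
  rw [integrable_prod_iff hmeas]
  have hbound : ∀ t : ℝ, 0 < t → ∀ u ∈ Ioc y x, ‖t ^ θ / (u + t)^2‖ ≤ t ^ θ / (y+t)^2 := by
    intro t ht u hu
    have hu0 : (0:ℝ) < u + t := by have := hu.1; linarith
    rw [Real.norm_of_nonneg (div_nonneg (Real.rpow_nonneg ht.le θ) (by positivity))]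
    gcongr
    exact hu.1.le
  constructor
  · filter_upwards [ae_restrict_mem measurableSet_Ioi] with t ht
    simp only [Function.uncurry_apply_pair]
    apply Integrable.mono' (g := fun _ => t ^ θ / (y+t)^2)
    · exact integrableOn_const measure_Ioc_lt_top.ne
    · apply Measurable.aestronglyMeasurable
      apply Measurable.div
      · exact measurable_const
      · exact ((measurable_id.add_const t).pow_const 2)
    · filter_upwards [ae_restrict_mem measurableSet_Ioc] with u hu
      exact hbound t ht u hu
  · apply Integrable.mono' (g := fun t => t ^ θ / (y+t)^2 * (x - y))
    · exact (aux_integrable θ hθ0 hθ1 y hy).mul_const _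
    · exact hmeas.norm.integral_prod_right'
    · filter_upwards [ae_restrict_mem measurableSet_Ioi] with t ht
      have h1 : ‖∫ u in Ioc y x, ‖t ^ θ / (u + t)^2‖‖
          ≤ t ^ θ / (y+t)^2 * (volume (Ioc y x)).toReal := by
        apply norm_setIntegral_le_of_norm_le_const_ae measure_Ioc_lt_top
        filter_upwards [ae_restrict_mem measurableSet_Ioc] with u hu
        rw [norm_norm]
        exact hbound t ht u hu
      calc ‖∫ u in Ioc y x, ‖t ^ θ / (u + t)^2‖‖
          ≤ t ^ θ / (y+t)^2 * (volume (Ioc y x)).toReal := h1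
        _ = t ^ θ / (y+t)^2 * (x - y) := by
            rw [Real.volume_Ioc, ENNReal.toReal_ofReal (by linarith)]

lemma aux_keyLt (θ : ℝ) (hθ0 : 0 < θ) (hθ1 : θ < 1) (x y : ℝ) (hy : 0 < y) (hyx : y < x) :
    ∫ t in Ioi (0:ℝ), t ^ θ * (1 / (x + t)) * (1 / (y + t))
      = (x - y)⁻¹ * ((x ^ θ - y ^ θ)/θ * ∫ t in Ioi (0:ℝ), t ^ θ / (1 + t)^2) := by
  have hx : 0 < x := hy.trans hyx
  have step1 : ∫ t in Ioi (0:ℝ), t ^ θ * (1 / (x + t)) * (1 / (y + t))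
      = (x - y)⁻¹ * ∫ t in Ioi (0:ℝ), ∫ u in Ioc y x, t ^ θ / (u + t)^2 := by
    rw [← integral_const_mul]
    apply setIntegral_congr_fun measurableSet_Ioi
    intro t ht
    simp only
    rw [aux_inner θ t y x ht hy hyx]
    have h1 : (0:ℝ) < x + t := by have : (0:ℝ) < t := ht; linarith
    have h2 : (0:ℝ) < y + t := by have : (0:ℝ) < t := ht; linarith
    have h3 : x - y ≠ 0 := sub_ne_zero.mpr (ne_of_gt hyx)
    have h4 : 1/(y+t) - 1/(x+t) = (x - y) * (1/(x+t)) * (1/(y+t)) := by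
      rw [div_sub_div _ _ h2.ne' h1.ne', one_div, one_div, div_eq_mul_inv, mul_inv]
      ring
    rw [h4, show (x-y)⁻¹ * (t ^ θ * ((x-y) * (1/(x+t)) * (1/(y+t))))
        = ((x-y)⁻¹ * (x-y)) * (t ^ θ * (1/(x+t)) * (1/(y+t))) from by ring,
      inv_mul_cancel₀ h3, one_mul]
  have step2 : ∫ t in Ioi (0:ℝ), ∫ u in Ioc y x, t ^ θ / (u + t)^2
      = ∫ u in Ioc y x, ∫ t in Ioi (0:ℝ), t ^ θ / (u + t)^2 :=
    integral_integral_swap (aux_fub θ hθ0 hθ1 x y hy hyx)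
  have step3 : ∫ u in Ioc y x, ∫ t in Ioi (0:ℝ), t ^ θ / (u + t)^2
      = ∫ u in Ioc y x, u ^ (θ - 1) * ∫ t in Ioi (0:ℝ), t ^ θ / (1 + t)^2 := by
    apply setIntegral_congr_fun measurableSet_Ioc
    intro u hu
    exact aux_scaling θ u (hy.trans hu.1)
  have step4 : ∫ u in Ioc y x, u ^ (θ - 1)
      = (x ^ θ - y ^ θ) / θ := by
    rw [← intervalIntegral.integral_of_le hyx.le]
    rw [integral_rpow (Or.inl (by linarith : (-1:ℝ) < θ - 1))]
    have h5 : θ - 1 + 1 = θ := by ring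
    rw [h5]
  rw [step1, step2, step3, integral_mul_const, step4]

theorem divided_difference_mellin_formula
    (θ : ℝ) (hθ0 : 0 < θ) (hθ1 : θ < 1) :
    ∃ c : ℝ, 0 < c ∧ ∀ x y : ℝ, 0 < x → 0 < y →
      (if x = y then θ * x ^ (θ - 1) else (x ^ θ - y ^ θ) / (x - y)) =
        c * ∫ t in Set.Ioi (0:ℝ), t ^ θ * (1 / (x + t)) * (1 / (y + t)) := by
  set K := ∫ t in Ioi (0:ℝ), t ^ θ / (1 + t)^2 with hKdef
  have hKpos : 0 < K := aux_Kpos θ hθ0 hθ1 (aux_integrable θ hθ0 hθ1 1 one_pos)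
  refine ⟨θ / K, div_pos hθ0 hKpos, ?_⟩
  have key : ∀ x y : ℝ, 0 < y → y < x →
      (x ^ θ - y ^ θ) / (x - y)
        = θ / K * ∫ t in Ioi (0:ℝ), t ^ θ * (1 / (x + t)) * (1 / (y + t)) := by
    intro x y hy hyx
    rw [aux_keyLt θ hθ0 hθ1 x y hy hyx, ← hKdef]
    have hxy : x - y ≠ 0 := sub_ne_zero.mpr (ne_of_gt hyx)
    field_simp
  intro x y hx hy
  by_cases hxy : x = y
  · rw [if_pos hxy]
    subst hxy
    have hcongr : ∫ t in Ioi (0:ℝ), t ^ θ * (1 / (x + t)) * (1 / (x + t))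
        = ∫ t in Ioi (0:ℝ), t ^ θ / (x + t)^2 :=
      setIntegral_congr_fun measurableSet_Ioi fun t _ => by
        rw [sq, one_div, div_eq_mul_inv, mul_inv, mul_assoc]
    rw [hcongr, aux_scaling θ x hx, ← hKdef]
    field_simp
  · rw [if_neg hxy]
    rcases lt_or_gt_of_ne hxy with h | h
    · have hk := key y x hx h
      have hcomm : ∫ t in Ioi (0:ℝ), t ^ θ * (1 / (y + t)) * (1 / (x + t))
          = ∫ t in Ioi (0:ℝ), t ^ θ * (1 / (x + t)) * (1 / (y + t)) :=
        setIntegral_congr_fun measurableSet_Ioi fun t _ => by ring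
      rw [hcomm] at hk
      rw [← hk]
      rw [div_eq_div_iff (sub_ne_zero.mpr hxy) (sub_ne_zero.mpr (ne_of_gt h))]
      ring
    · exact key x y hy h
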